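/- Let Δ be a pure shellable simplicial complex with shelling F_1,...,F_m, and suppose that for each i ≥ 2 the complex ⟨F_1,...,F_{i−1}⟩ ∩ ⟨F_i⟩ is generated by {F_i \ {v} : v ∈ R_i} for a set R_i ⊆ F_i. Then for any field K, the h-polynomial h(t) of K[Δ] satisfies Σ_{i=1}^m t^{|R_i|} = h(t), where R_1 = ∅; in particular h(1) = m, the number of facets of Δ. -/

import Mathlib

open MvPolynomial

/-- The Stanley–Reisner ideal of a collection `Δ` of subsets of `Fin n`. -/
noncomputable def srIdeal (K : Type) [Field K] (n : ℕ) (Δ : Set (Finset (Fin n))) :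
    Ideal (MvPolynomial (Fin n) K) :=
  Ideal.span {p | ∃ F : Finset (Fin n), F ∉ Δ ∧ p = ∏ i ∈ F, X i}

/-- Dimension of the degree-`k` graded component of `S/I`, `S = K[x_1,…,x_n]`. -/
noncomputable def hilbFn (K : Type) [Field K] (n : ℕ) (I : Ideal (MvPolynomial (Fin n) K))
    (k : ℕ) : ℕ :=
  Module.finrank K
    ((homogeneousSubmodule (Fin n) K k) ⧸
      (Submodule.comap (homogeneousSubmodule (Fin n) K k).subtype (Submodule.restrictScalars K I)))

/-- The Hilbert–Poincaré series of `S/I`, as an integer power series. -/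
noncomputable def hilbSeries (K : Type) [Field K] (n : ℕ) (I : Ideal (MvPolynomial (Fin n) K)) :
    PowerSeries ℤ :=
  PowerSeries.mk fun k => (hilbFn K n I k : ℤ)

namespace MW

variable {n : ℕ}

lemma degree_eq_sum_univ (f : Fin n →₀ ℕ) : f.degree = ∑ i : Fin n, f i :=
  Finset.sum_subset (Finset.subset_univ _) (fun i _ hi => Finsupp.notMem_support_iff.mp hi)

lemma degree_add (f g : Fin n →₀ ℕ) : (f + g).degree = f.degree + g.degree := by
  simp [degree_eq_sum_univ, Finset.sum_add_distrib]

lemma support_add_eq (f g : Fin n →₀ ℕ) : (f + g).support = f.support ∪ g.support := by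
  ext i
  simp only [Finsupp.mem_support_iff, Finset.mem_union, Finsupp.add_apply]
  omega

lemma degree_single_one (a : Fin n) : (Finsupp.single a 1 : Fin n →₀ ℕ).degree = 1 := by
  rw [Finsupp.degree_single]

/-- characteristic finsupp of a finset -/
noncomputable def chi (S : Finset (Fin n)) : Fin n →₀ ℕ := ∑ v ∈ S, Finsupp.single v 1

lemma chi_apply (S : Finset (Fin n)) (i : Fin n) : chi S i = if i ∈ S then 1 else 0 := by
  classical
  rw [chi, Finset.sum_apply']
  simp [Finsupp.single_apply, Finset.sum_ite_eq' S i (fun _ => 1)]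

lemma chi_support (S : Finset (Fin n)) : (chi S).support = S := by
  ext i; simp [Finsupp.mem_support_iff, chi_apply]

lemma chi_degree (S : Finset (Fin n)) : (chi S).degree = S.card := by
  simp [degree_eq_sum_univ, chi_apply]

lemma chi_le {S : Finset (Fin n)} {μ : Fin n →₀ ℕ} (h : S ⊆ μ.support) : chi S ≤ μ := by
  intro i
  rw [chi_apply]
  split_ifs with hi
  · exact (Finsupp.mem_support_iff.mp (h hi)).bot_lt
  · exact Nat.zero_le _

lemma add_right_inj' (c : Fin n →₀ ℕ) : Function.Injective (· + c) := by
  intro f g h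
  ext i
  have := DFunLike.congr_fun h i
  simpa using this


/-- monomials supported in `S` of degree `k` -/
def BSet (S : Finset (Fin n)) (k : ℕ) : Set (Fin n →₀ ℕ) :=
  {ν | ν.support ⊆ S ∧ ν.degree = k}

lemma BSet_finite (S : Finset (Fin n)) (k : ℕ) : (BSet S k).Finite :=
  (Finsupp.finite_of_degree_le k).subset (fun _ h => h.2.le)

lemma BSet_zero (S : Finset (Fin n)) : BSet S 0 = {0} := by
  ext ν
  constructor
  · rintro ⟨-, hd⟩
    exact (Finsupp.degree_eq_zero_iff ν).mp hd
  · rintro rfl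
    exact ⟨by simp, by simp⟩

noncomputable def genB (S : Finset (Fin n)) : PowerSeries ℤ :=
  PowerSeries.mk fun k => ((BSet S k).ncard : ℤ)

lemma BSet_insert {a : Fin n} {S : Finset (Fin n)} (ha : a ∉ S) (k : ℕ) :
    BSet (insert a S) (k + 1) =
      BSet S (k + 1) ∪ ((· + Finsupp.single a 1) '' BSet (insert a S) k) := by
  ext μ
  constructor
  · rintro ⟨hsup, hdeg⟩
    by_cases hμa : μ a = 0
    · left
      refine ⟨fun v hv => ?_, hdeg⟩
      rcases Finset.mem_insert.mp (hsup hv) with rfl | h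
      · exact absurd hμa (Finsupp.mem_support_iff.mp hv)
      · exact h
    · right
      have hle : Finsupp.single a 1 ≤ μ := by
        rw [Finsupp.single_le_iff]; omega
      have heq : μ - Finsupp.single a 1 + Finsupp.single a 1 = μ := tsub_add_cancel_of_le hle
      refine ⟨μ - Finsupp.single a 1, ⟨?_, ?_⟩, heq⟩
      · exact (Finsupp.support_tsub).trans hsup
      · have := congrArg Finsupp.degree heq
        rw [degree_add, degree_single_one, hdeg] at this
        omega
  · rintro (⟨h1, h2⟩ | ⟨ν, ⟨hs, hd⟩, rfl⟩)
    · exact ⟨h1.trans (Finset.subset_insert _ _), h2⟩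
    · constructor
      · rw [support_add_eq]
        refine Finset.union_subset hs ?_
        intro v hv
        rw [Finsupp.support_single_ne_zero _ one_ne_zero, Finset.mem_singleton] at hv
        exact hv ▸ Finset.mem_insert_self a S
      · rw [degree_add, degree_single_one, hd]

lemma ncard_BSet_insert {a : Fin n} {S : Finset (Fin n)} (ha : a ∉ S) (k : ℕ) :
    (BSet (insert a S) (k + 1)).ncard = (BSet S (k + 1)).ncard + (BSet (insert a S) k).ncard := by
  rw [BSet_insert ha k, Set.ncard_union_eq ?_ (BSet_finite _ _) ((BSet_finite _ _).image _),
    Set.ncard_image_of_injective _ (add_right_inj' _)]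
  rw [Set.disjoint_left]
  rintro μ ⟨hsup, -⟩ ⟨ν, -, rfl⟩
  refine ha (hsup ?_)
  show a ∈ (ν + Finsupp.single a 1).support
  rw [Finsupp.mem_support_iff]
  simp

lemma genB_mul {a : Fin n} {S : Finset (Fin n)} (ha : a ∉ S) :
    genB (insert a S) * (1 - PowerSeries.X) = genB S := by
  ext k
  rw [mul_sub, mul_one, map_sub]
  cases k with
  | zero =>
    rw [PowerSeries.coeff_zero_eq_constantCoeff, map_mul]
    simp [genB, BSet_zero, PowerSeries.constantCoeff_X]
  | succ k =>
    rw [PowerSeries.coeff_succ_mul_X]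
    simp only [genB, PowerSeries.coeff_mk]
    rw [ncard_BSet_insert ha k]
    push_cast
    ring

lemma genB_inv (S : Finset (Fin n)) : genB S * (1 - PowerSeries.X) ^ S.card = 1 := by
  classical
  induction S using Finset.induction with
  | empty =>
    simp only [Finset.card_empty, pow_zero, mul_one]
    ext k
    cases k with
    | zero => simp [genB, BSet_zero]
    | succ k =>
      have : BSet (∅ : Finset (Fin n)) (k+1) = ∅ := by
        ext ν
        simp only [BSet, Set.mem_setOf_eq, Set.mem_empty_iff_false, iff_false, not_and]
        intro hs
        have : ν = 0 := by
          ext i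
          by_contra h
          exact absurd (hs (Finsupp.mem_support_iff.mpr h)) (Finset.notMem_empty i)
        rw [this]
        simp
      simp [genB, this, PowerSeries.coeff_one]
  | @insert a S ha ih =>
    rw [Finset.card_insert_of_notMem ha, pow_succ, ← mul_assoc, mul_right_comm,
      genB_mul ha, ih]

/-- monomials with support between `R` and `S`, of degree `k` -/
def ISet (R S : Finset (Fin n)) (k : ℕ) : Set (Fin n →₀ ℕ) :=
  {μ | μ.degree = k ∧ R ⊆ μ.support ∧ μ.support ⊆ S}

lemma ISet_finite (R S : Finset (Fin n)) (k : ℕ) : (ISet R S k).Finite :=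
  (Finsupp.finite_of_degree_le k).subset (fun _ h => h.1.le)

lemma card_le_degree {μ : Fin n →₀ ℕ} : μ.support.card ≤ μ.degree := by
  rw [Finsupp.degree, Finset.card_eq_sum_ones]
  exact Finset.sum_le_sum fun i hi => (Finsupp.mem_support_iff.mp hi).bot_lt

lemma ISet_eq_empty {R S : Finset (Fin n)} {k : ℕ} (h : k < R.card) : ISet R S k = ∅ := by
  ext μ
  simp only [ISet, Set.mem_setOf_eq, Set.mem_empty_iff_false, iff_false]
  rintro ⟨rfl, hR, -⟩
  exact absurd ((Finset.card_le_card hR).trans card_le_degree) (Nat.not_le.mpr h)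

lemma ISet_eq_image {R S : Finset (Fin n)} (hRS : R ⊆ S) (k : ℕ) :
    ISet R S (k + R.card) = (· + chi R) '' BSet S k := by
  ext μ
  constructor
  · rintro ⟨hdeg, hR, hS⟩
    have hle : chi R ≤ μ := chi_le hR
    have heq : μ - chi R + chi R = μ := tsub_add_cancel_of_le hle
    refine ⟨μ - chi R, ⟨(Finsupp.support_tsub).trans hS, ?_⟩, heq⟩
    have := congrArg Finsupp.degree heq
    rw [degree_add, chi_degree, hdeg] at this
    omega
  · rintro ⟨ν, ⟨hs, hd⟩, rfl⟩
    have hsupp : (ν + chi R).support = ν.support ∪ R := by rw [support_add_eq, chi_support]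
    refine ⟨by rw [degree_add, chi_degree, hd], ?_, ?_⟩
    · rw [hsupp]; exact Finset.subset_union_right
    · rw [hsupp]; exact Finset.union_subset hs hRS

lemma ISet_series {R S : Finset (Fin n)} (hRS : R ⊆ S) :
    PowerSeries.mk (fun k => ((ISet R S k).ncard : ℤ)) =
      PowerSeries.X ^ R.card * genB S := by
  ext k
  rw [PowerSeries.coeff_mk, PowerSeries.coeff_X_pow_mul']
  split_ifs with h
  · have hk : k = (k - R.card) + R.card := (Nat.sub_add_cancel h).symm
    rw [genB, PowerSeries.coeff_mk]
    conv_lhs => rw [hk]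
    rw [ISet_eq_image hRS, Set.ncard_image_of_injective _ (add_right_inj' _)]
  · rw [ISet_eq_empty (Nat.not_le.mp h)]
    simp


lemma prod_X_eq {K : Type} [Field K] (S : Finset (Fin n)) :
    (∏ i ∈ S, X i : MvPolynomial (Fin n) K) = monomial (chi S) 1 := by
  rw [← prod_X_pow_eq_monomial, chi_support]
  refine Finset.prod_congr rfl fun i hi => ?_
  rw [chi_apply, if_pos hi, pow_one]

lemma mem_srIdeal_iff {K : Type} [Field K] {Δ : Set (Finset (Fin n))}
    (hdown : ∀ F F' : Finset (Fin n), F' ∈ Δ → F ⊆ F' → F ∈ Δ)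
    (p : MvPolynomial (Fin n) K) :
    p ∈ srIdeal K n Δ ↔ ∀ μ ∈ p.support, μ.support ∉ Δ := by
  classical
  constructor
  · intro hp
    let J : Ideal (MvPolynomial (Fin n) K) :=
      { carrier := {q | ∀ μ ∈ q.support, μ.support ∉ Δ}
        zero_mem' := by simp
        add_mem' := fun {q r} hq hr μ hμ => by
          rcases Finset.mem_union.mp (MvPolynomial.support_add hμ) with h | h
          exacts [hq μ h, hr μ h]
        smul_mem' := fun c q hq μ hμ => by
          rw [smul_eq_mul] at hμ
          have hμ' := MvPolynomial.support_mul c q hμ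
          rw [Finset.mem_add] at hμ'
          obtain ⟨ν₁, h1, ν₂, h2, rfl⟩ := hμ'
          intro hmem
          exact hq ν₂ h2 (hdown _ _ hmem
            (by rw [support_add_eq]; exact Finset.subset_union_right)) }
    have hle : srIdeal K n Δ ≤ J := by
      rw [srIdeal, Ideal.span_le]
      rintro q ⟨Fq, hFq, rfl⟩
      intro μ hμ
      rw [prod_X_eq, support_monomial, if_neg one_ne_zero, Finset.mem_singleton] at hμ
      rw [hμ, chi_support]
      exact hFq
    exact hle hp
  · intro h
    rw [p.as_sum]
    apply Ideal.sum_mem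
    intro μ hμ
    have hgen : (∏ i ∈ μ.support, X i : MvPolynomial (Fin n) K) ∈ srIdeal K n Δ :=
      Ideal.subset_span ⟨μ.support, h μ hμ, rfl⟩
    have hmono : (monomial μ (coeff μ p) : MvPolynomial (Fin n) K)
        = monomial (μ - chi μ.support) (coeff μ p) * ∏ i ∈ μ.support, X i := by
      rw [prod_X_eq, monomial_mul, mul_one,
        tsub_add_cancel_of_le (chi_le (subset_refl _))]
    rw [hmono]
    exact Ideal.mul_mem_left _ _ hgen

/-- monomials of degree `k` whose support is a face of `Δ` -/
def MSet (Δ : Set (Finset (Fin n))) (k : ℕ) : Set (Fin n →₀ ℕ) :=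
  {μ | μ.degree = k ∧ μ.support ∈ Δ}

lemma MSet_finite (Δ : Set (Finset (Fin n))) (k : ℕ) : (MSet Δ k).Finite :=
  (Finsupp.finite_of_degree_le k).subset (fun _ h => h.1.le)

lemma hilbFn_eq (K : Type) [Field K] {Δ : Set (Finset (Fin n))}
    (hdown : ∀ F F' : Finset (Fin n), F' ∈ Δ → F ⊆ F' → F ∈ Δ) (k : ℕ) :
    hilbFn K n (srIdeal K n Δ) k = (MSet Δ k).ncard := by
  classical
  haveI : Fintype ↥(MSet Δ k) := (MSet_finite Δ k).fintype
  let φ : (homogeneousSubmodule (Fin n) K k) →ₗ[K] (↥(MSet Δ k) → K) :=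
    { toFun := fun p μ => coeff μ.1 p.1
      map_add' := fun p q => by ext μ; simp
      map_smul' := fun c p => by ext μ; simp }
  have hker : LinearMap.ker φ =
      Submodule.comap (homogeneousSubmodule (Fin n) K k).subtype
        (Submodule.restrictScalars K (srIdeal K n Δ)) := by
    ext p
    simp only [LinearMap.mem_ker, Submodule.mem_comap, Submodule.coe_subtype,
      Submodule.restrictScalars_mem]
    rw [mem_srIdeal_iff hdown]
    constructor
    · intro h0 μ hμ hmem
      have hdeg : μ.degree = k := by
        rw [Finsupp.degree_eq_weight_one]
        exact p.2 (MvPolynomial.mem_support_iff.mp hμ)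
      have hc := congrFun h0 (⟨μ, hdeg, hmem⟩ : ↥(MSet Δ k))
      exact (MvPolynomial.mem_support_iff.mp hμ) hc
    · intro h
      funext μ
      show coeff μ.1 p.1 = 0
      by_contra h'
      exact h μ.1 (MvPolynomial.mem_support_iff.mpr h') μ.2.2
  have hsurj : Function.Surjective φ := by
    intro f
    have hhom : (∑ μ : ↥(MSet Δ k), (monomial μ.1 (f μ) : MvPolynomial (Fin n) K))
        ∈ homogeneousSubmodule (Fin n) K k := by
      rw [mem_homogeneousSubmodule]
      apply MvPolynomial.IsHomogeneous.sum
      intro μ _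
      exact isHomogeneous_monomial _ μ.2.1
    refine ⟨⟨_, hhom⟩, ?_⟩
    funext μ
    show coeff μ.1 (∑ ν : ↥(MSet Δ k), (monomial ν.1 (f ν) : MvPolynomial (Fin n) K)) = f μ
    rw [MvPolynomial.coeff_sum, Finset.sum_eq_single μ]
    · rw [coeff_monomial, if_pos rfl]
    · intro ν _ hν
      rw [coeff_monomial, if_neg (fun h => hν (Subtype.ext h))]
    · intro h; exact absurd (Finset.mem_univ μ) h
  have e := (Submodule.quotEquivOfEq _ _ hker.symm).trans
    (φ.quotKerEquivOfSurjective hsurj)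
  rw [hilbFn, e.finrank_eq, Module.finrank_pi, ← Nat.card_eq_fintype_card]
  exact Nat.card_coe_set_eq _

end MW

/-- McMullen–Walkup with the evaluation `h(1) = m`: if `Δ` is a pure shellable complex on `[n]`
with shelling `F 0, …, F (m-1)` (facets of cardinality `d`, so `dim Δ + 1 = d`), and for each
`i ≥ 1` the complex `⟨F 0, …, F (i-1)⟩ ∩ ⟨F i⟩` is generated by `{F i \ {v} : v ∈ R i}` with
`R i ⊆ F i` (and `R 0 = ∅`), then the `h`-polynomial of `K[Δ]` — the numerator of the
Hilbert–Poincaré series `HP(t) = h(t)/(1-t)^{dim Δ + 1}` — equals `Σ_{i=1}^m t^{|R i|}`;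
in particular `h(1) = m`, the number of facets of `Δ`. -/


theorem mcMullen_walkup_eval (K : Type) [Field K] (n d m : ℕ)
    (Δ : Set (Finset (Fin n)))
    (hdown : ∀ F F' : Finset (Fin n), F' ∈ Δ → F ⊆ F' → F ∈ Δ)
    (hvert : ∀ i : Fin n, ({i} : Finset (Fin n)) ∈ Δ)
    (F : ℕ → Finset (Fin n)) (R : ℕ → Finset (Fin n))
    (hinj : ∀ i < m, ∀ j < m, F i = F j → i = j)
    (hfacets : ∀ G : Finset (Fin n),
      (G ∈ Δ ∧ ∀ G' ∈ Δ, G ⊆ G' → G = G') ↔ ∃ i < m, G = F i)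
    (hpure : ∀ i < m, (F i).card = d)
    (hR0 : R 0 = ∅)
    (hRsub : ∀ i < m, R i ⊆ F i)
    (hRne : ∀ i, 0 < i → i < m → (R i).Nonempty)
    (hshell : ∀ i, 0 < i → i < m →
      ∀ S : Finset (Fin n), ((S ⊆ F i ∧ ∃ j < i, S ⊆ F j) ↔ ∃ v ∈ R i, S ⊆ F i \ {v})) :
    hilbSeries K n (srIdeal K n Δ) * (1 - PowerSeries.X) ^ d =
      ((∑ i ∈ Finset.range m, Polynomial.X ^ (R i).card : Polynomial ℤ) : PowerSeries ℤ) ∧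
    (∑ i ∈ Finset.range m, Polynomial.X ^ (R i).card : Polynomial ℤ).eval 1 = m := by
  classical
  have hFmem : ∀ i, i < m → F i ∈ Δ := fun i hi => ((hfacets (F i)).mpr ⟨i, hi, rfl⟩).1
  have hexists : ∀ G : Finset (Fin n), G ∈ Δ → ∃ i, i < m ∧ G ⊆ F i := by
    intro G hG
    obtain ⟨G', hG'mem, hmax⟩ := Set.Finite.exists_maximalFor
      (fun A : Finset (Fin n) => A.card) {A | A ∈ Δ ∧ G ⊆ A} (Set.toFinite _)
      ⟨G, hG, subset_rfl⟩
    have hmaximal : ∀ G'' ∈ Δ, G' ⊆ G'' → G' = G'' := by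
      intro G'' hG'' hsub
      refine Finset.eq_of_subset_of_card_le hsub ?_
      have := @hmax G'' ⟨hG'', hG'mem.2.trans hsub⟩ (Finset.card_le_card hsub)
      omega
    obtain ⟨i, hi, hGF⟩ := (hfacets G').mp ⟨hG'mem.1, hmaximal⟩
    exact ⟨i, hi, hGF ▸ hG'mem.2⟩
  have hkey : ∀ G : Finset (Fin n), G ∈ Δ → ∃ i, i < m ∧ R i ⊆ G ∧ G ⊆ F i := by
    intro G hG
    have hP : ∃ i, i < m ∧ G ⊆ F i := hexists G hG
    obtain ⟨hi₀m, hGF⟩ : Nat.find hP < m ∧ G ⊆ F (Nat.find hP) := Nat.find_spec hP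
    refine ⟨Nat.find hP, hi₀m, ?_, hGF⟩
    intro v hv
    by_contra hvG
    rcases Nat.eq_zero_or_pos (Nat.find hP) with h0 | hpos
    · rw [h0, hR0] at hv; exact absurd hv (Finset.notMem_empty v)
    · have hsub : G ⊆ F (Nat.find hP) \ {v} := by
        intro x hx
        rw [Finset.mem_sdiff, Finset.mem_singleton]
        exact ⟨hGF hx, fun h => hvG (h ▸ hx)⟩
      obtain ⟨-, j, hji, hGFj⟩ := (hshell _ hpos hi₀m G).mpr ⟨v, hv, hsub⟩
      exact Nat.find_min hP hji ⟨hji.trans hi₀m, hGFj⟩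
  have huniq : ∀ (G : Finset (Fin n)) i j, i < m → j < m →
      R i ⊆ G → G ⊆ F i → R j ⊆ G → G ⊆ F j → i = j := by
    have aux : ∀ (G : Finset (Fin n)) i j, i < j → j < m →
        G ⊆ F i → R j ⊆ G → G ⊆ F j → False := by
      intro G i j hij hjm hFi hRj hFj
      obtain ⟨v, hvR, hsub⟩ := (hshell j (Nat.zero_lt_of_lt hij) hjm G).mp ⟨hFj, i, hij, hFi⟩
      have := hsub (hRj hvR)
      rw [Finset.mem_sdiff, Finset.mem_singleton] at this
      exact this.2 rfl
    intro G i j him hjm hRi hFi hRj hFj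
    rcases lt_trichotomy i j with h | h | h
    · exact (aux G i j h hjm hFi hRj hFj).elim
    · exact h
    · exact (aux G j i h him hFj hRi hFi).elim
  have hpart : ∀ k : ℕ, (MW.MSet Δ k).ncard
      = ∑ i ∈ Finset.range m, (MW.ISet (R i) (F i) k).ncard := by
    intro k
    have key : ∀ t, t ≤ m →
        ({μ : Fin n →₀ ℕ | μ.degree = k ∧ ∃ i < t, R i ⊆ μ.support ∧ μ.support ⊆ F i}).ncard
          = ∑ i ∈ Finset.range t, (MW.ISet (R i) (F i) k).ncard := by
      intro t
      induction t with
      | zero =>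
        intro _
        simp only [Finset.range_zero, Finset.sum_empty]
        have h0 : {μ : Fin n →₀ ℕ |
            μ.degree = k ∧ ∃ i < 0, R i ⊆ μ.support ∧ μ.support ⊆ F i} = ∅ := by
          ext μ; simp
        rw [h0, Set.ncard_empty]
      | succ t ih =>
        intro ht
        have hsets : {μ : Fin n →₀ ℕ |
              μ.degree = k ∧ ∃ i < t + 1, R i ⊆ μ.support ∧ μ.support ⊆ F i}
            = {μ : Fin n →₀ ℕ | μ.degree = k ∧ ∃ i < t, R i ⊆ μ.support ∧ μ.support ⊆ F i}
              ∪ MW.ISet (R t) (F t) k := by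
          ext μ
          simp only [Set.mem_setOf_eq, Set.mem_union, MW.ISet, Nat.lt_succ_iff_lt_or_eq]
          constructor
          · rintro ⟨hdeg, i, (hit | rfl), hi⟩
            · exact Or.inl ⟨hdeg, i, hit, hi⟩
            · exact Or.inr ⟨hdeg, hi⟩
          · rintro (⟨hdeg, i, hit, hi⟩ | ⟨hdeg, hi⟩)
            · exact ⟨hdeg, i, Or.inl hit, hi⟩
            · exact ⟨hdeg, t, Or.inr rfl, hi⟩
        have hdisj : Disjoint
            {μ : Fin n →₀ ℕ | μ.degree = k ∧ ∃ i < t, R i ⊆ μ.support ∧ μ.support ⊆ F i}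
            (MW.ISet (R t) (F t) k) := by
          rw [Set.disjoint_left]
          rintro μ ⟨hdeg, i, hit, hRi, hFi⟩ ⟨-, hRt, hFt⟩
          exact absurd (huniq μ.support i t (hit.trans (Nat.lt_of_succ_le ht))
            (Nat.lt_of_succ_le ht) hRi hFi hRt hFt) (Nat.ne_of_lt hit)
        have hfin1 : ({μ : Fin n →₀ ℕ |
            μ.degree = k ∧ ∃ i < t, R i ⊆ μ.support ∧ μ.support ⊆ F i}).Finite :=
          (Finsupp.finite_of_degree_le k).subset (fun _ h => h.1.le)
        rw [hsets, Set.ncard_union_eq hdisj hfin1 (MW.ISet_finite _ _ _),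
          ih (Nat.le_of_succ_le ht), Finset.sum_range_succ]
    have hMeq : MW.MSet Δ k
        = {μ : Fin n →₀ ℕ | μ.degree = k ∧ ∃ i < m, R i ⊆ μ.support ∧ μ.support ⊆ F i} := by
      ext μ
      simp only [MW.MSet, Set.mem_setOf_eq]
      constructor
      · rintro ⟨hdeg, hmem⟩
        obtain ⟨i, him, hRi, hFi⟩ := hkey _ hmem
        exact ⟨hdeg, i, him, hRi, hFi⟩
      · rintro ⟨hdeg, i, him, -, hFi⟩
        exact ⟨hdeg, hdown _ _ (hFmem i him) hFi⟩
    rw [hMeq]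
    exact key m le_rfl
  have hseries : hilbSeries K n (srIdeal K n Δ)
      = ∑ i ∈ Finset.range m, PowerSeries.X ^ (R i).card * MW.genB (F i) := by
    ext k
    rw [hilbSeries, PowerSeries.coeff_mk, MW.hilbFn_eq K hdown k, hpart k, map_sum]
    push_cast
    refine Finset.sum_congr rfl fun i hi => ?_
    rw [← MW.ISet_series (hRsub i (Finset.mem_range.mp hi)), PowerSeries.coeff_mk]
  constructor
  · rw [hseries, Finset.sum_mul]
    have h1 : ∀ i ∈ Finset.range m,
        PowerSeries.X ^ (R i).card * MW.genB (F i) * (1 - PowerSeries.X) ^ d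
          = PowerSeries.X ^ (R i).card := by
      intro i hi
      rw [mul_assoc, ← hpure i (Finset.mem_range.mp hi), MW.genB_inv, mul_one]
    rw [Finset.sum_congr rfl h1]
    rw [← Polynomial.coeToPowerSeries.ringHom_apply, map_sum]
    refine Finset.sum_congr rfl fun i _ => ?_
    rw [map_pow, Polynomial.coeToPowerSeries.ringHom_apply, Polynomial.coe_X]
  · rw [Polynomial.eval_finset_sum]
    simp
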